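/- The function f(P,u) = log2(1 + Pβ/(uσ²)) + L[log2(u) − log2(e)(1 − 1/u)], for fixed P > 0, β > 0, σ² > 0, L ≥ 1, is minimized over u ≥ 1 at the unique u* > 1 satisfying the fixed-point equation u* = 1 + Pβ/(Lσ² + LPβ/u*); specifically f is monotonically decreasing in u on [1, u*] and monotonically increasing on [u*, ∞). -/
import Mathlib


open Real Set

theorem stmt_0 (P β σ2 L : ℝ) (hP : 0 < P) (hβ : 0 < β) (hσ : 0 < σ2) (hL : 1 ≤ L) :
    ∃! ustar : ℝ,
      1 < ustar ∧
      ustar = 1 + P * β / (L * σ2 + L * P * β / ustar) ∧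
      AntitoneOn (fun u : ℝ =>
          Real.logb 2 (1 + P * β / (u * σ2)) +
          L * (Real.logb 2 u - Real.logb 2 (Real.exp 1) * (1 - 1 / u)))
        (Set.Icc 1 ustar) ∧
      MonotoneOn (fun u : ℝ =>
          Real.logb 2 (1 + P * β / (u * σ2)) +
          L * (Real.logb 2 u - Real.logb 2 (Real.exp 1) * (1 - 1 / u)))
        (Set.Ici ustar) := by
  have hL0 : (0:ℝ) < L := lt_of_lt_of_le one_pos hL
  have hlog2 : (0:ℝ) < Real.log 2 := Real.log_pos one_lt_two
  set f : ℝ → ℝ := fun u : ℝ =>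
      Real.logb 2 (1 + P * β / (u * σ2)) +
      L * (Real.logb 2 u - Real.logb 2 (Real.exp 1) * (1 - 1 / u)) with hfdef
  set G : ℝ → ℝ := fun u => L * (u - 1) * (u * σ2 + P * β) - P * β * u with hGdef
  -- strict monotonicity of G on [1, ∞)
  have hGmono : ∀ a b : ℝ, 1 ≤ a → a < b → G a < G b := by
    intro a b ha hab
    have h1 : 0 < (b - a) * (L * σ2 * (a + b) + L * P * β - L * σ2 - P * β) := by
      apply mul_pos (by linarith)
      nlinarith [mul_pos hP hβ, mul_pos hL0 hσ]
    show L * (a - 1) * (a * σ2 + P * β) - P * β * a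
        < L * (b - 1) * (b * σ2 + P * β) - P * β * b
    nlinarith [h1]
  -- existence of the root of G
  obtain ⟨u, hu, hGu⟩ : ∃ u ∈ Set.Icc (1:ℝ) (1 + P * β / (L * σ2)), G u = 0 := by
    set t : ℝ := P * β / (L * σ2) with htdef
    have ht : 0 < t := by positivity
    have hM : (1:ℝ) ≤ 1 + t := by linarith
    have hc : ContinuousOn G (Set.Icc 1 (1 + t)) := by
      simp only [hGdef]; fun_prop
    have h1 : G 1 ≤ 0 := by
      show L * (1 - 1) * (1 * σ2 + P * β) - P * β * 1 ≤ 0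
      nlinarith [mul_pos hP hβ]
    have hkey : L * σ2 * t = P * β := by
      rw [htdef]; field_simp
    have hkey2 : L * σ2 * (t * t) = P * β * t := by
      rw [← hkey]; ring
    have h2 : 0 ≤ G (1 + t) := by
      show 0 ≤ L * (1 + t - 1) * ((1 + t) * σ2 + P * β) - P * β * (1 + t)
      nlinarith [hkey, hkey2, mul_pos (mul_pos hL0 ht) (mul_pos hP hβ)]
    obtain ⟨u, hu, hGu⟩ := intermediate_value_Icc hM hc ⟨h1, h2⟩
    exact ⟨u, hu, hGu⟩
  have hu1 : 1 < u := by
    rcases eq_or_lt_of_le hu.1 with h | h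
    · exfalso
      have hG1 : G 1 = -(P * β) := by
        show L * (1 - 1) * (1 * σ2 + P * β) - P * β * 1 = -(P * β); ring
      rw [← h] at hGu
      rw [hGu] at hG1
      nlinarith [mul_pos hP hβ]
    · exact h
  have hu0 : (0:ℝ) < u := lt_trans one_pos hu1
  -- equivalence of fixed point equation and G = 0
  have hfix : ∀ v : ℝ, 0 < v → (v = 1 + P * β / (L * σ2 + L * P * β / v) ↔ G v = 0) := by
    intro v hv
    have hden : L * σ2 + L * P * β / v > 0 := by positivity
    constructor
    · intro h
      field_simp at h
      show L * (v - 1) * (v * σ2 + P * β) - P * β * v = 0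
      linear_combination h
    · intro h
      have h0 : L * (v - 1) * (v * σ2 + P * β) - P * β * v = 0 := h
      rw [eq_comm]
      field_simp
      linear_combination -h0
  -- derivative of f
  have hderiv : ∀ x : ℝ, 0 < x →
      HasDerivAt f (G x / (x ^ 2 * (x * σ2 + P * β) * Real.log 2)) x := by
    intro x hx
    have hx0 : x ≠ 0 := ne_of_gt hx
    have hpos : 0 < 1 + P * β / (x * σ2) := by positivity
    have hfeq : f = fun y : ℝ =>
        (Real.log (1 + P * β / (y * σ2)) + L * (Real.log y - (1 - 1 / y))) / Real.log 2 := by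
      funext y
      simp only [hfdef, Real.logb, Real.log_exp]
      ring
    have hd0 : HasDerivAt (fun y : ℝ => y * σ2) σ2 x := by
      simpa using (hasDerivAt_id x).mul_const σ2
    have hd1 : HasDerivAt (fun y : ℝ => 1 + P * β / (y * σ2))
        ((0 * (x * σ2) - P * β * σ2) / (x * σ2) ^ 2) x :=
      ((hasDerivAt_const x (P * β)).div hd0 (by positivity)).const_add 1
    have hd2 : HasDerivAt (fun y : ℝ => Real.log (1 + P * β / (y * σ2)))
        (((0 * (x * σ2) - P * β * σ2) / (x * σ2) ^ 2) / (1 + P * β / (x * σ2))) x :=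
      hd1.log (ne_of_gt hpos)
    have hd3 : HasDerivAt (fun y : ℝ => Real.log y) x⁻¹ x := Real.hasDerivAt_log hx0
    have hd4 : HasDerivAt (fun y : ℝ => 1 - 1 / y) ((x ^ 2)⁻¹) x := by
      simpa [one_div] using (hasDerivAt_inv hx0).const_sub 1
    have hdF : HasDerivAt (fun y : ℝ =>
        (Real.log (1 + P * β / (y * σ2)) + L * (Real.log y - (1 - 1 / y))) / Real.log 2)
        ((((0 * (x * σ2) - P * β * σ2) / (x * σ2) ^ 2) / (1 + P * β / (x * σ2))
          + L * (x⁻¹ - (x ^ 2)⁻¹)) / Real.log 2) x :=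
      (hd2.add ((hd3.sub hd4).const_mul L)).div_const (Real.log 2)
    rw [hfeq]
    convert hdF using 1
    show (L * (x - 1) * (x * σ2 + P * β) - P * β * x) / (x ^ 2 * (x * σ2 + P * β) * Real.log 2) = _
    have hxσ : x * σ2 + P * β ≠ 0 := by positivity
    have h1p : 1 + P * β / (x * σ2) ≠ 0 := ne_of_gt hpos
    field_simp
    ring
  have hcontOn : ∀ s : Set ℝ, s ⊆ Set.Ioi (0:ℝ) → ContinuousOn f s := by
    intro s hs y hy
    exact ((hderiv y (hs hy)).differentiableAt.continuousAt).continuousWithinAt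
  -- antitone on [1, u]
  have hanti : AntitoneOn f (Set.Icc 1 u) := by
    apply antitoneOn_of_deriv_nonpos (convex_Icc 1 u)
    · exact hcontOn _ (fun y hy => lt_of_lt_of_le one_pos hy.1)
    · intro y hy
      rw [interior_Icc] at hy
      exact ((hderiv y (by linarith [hy.1])).differentiableAt).differentiableWithinAt
    · intro y hy
      rw [interior_Icc] at hy
      have hy0 : 0 < y := by linarith [hy.1]
      rw [(hderiv y hy0).deriv]
      apply div_nonpos_of_nonpos_of_nonneg
      · have := hGmono y u (le_of_lt hy.1) hy.2
        rw [hGu] at this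
        linarith
      · positivity
  -- monotone on [u, ∞)
  have hmonoOn : MonotoneOn f (Set.Ici u) := by
    apply monotoneOn_of_deriv_nonneg (convex_Ici u)
    · exact hcontOn _ (fun y hy => lt_of_lt_of_le hu0 hy)
    · intro y hy
      rw [interior_Ici] at hy
      exact ((hderiv y (lt_trans hu0 hy)).differentiableAt).differentiableWithinAt
    · intro y hy
      rw [interior_Ici] at hy
      have hy0 : 0 < y := lt_trans hu0 hy
      rw [(hderiv y hy0).deriv]
      apply div_nonneg
      · have := hGmono u y (le_of_lt hu1) hy
        rw [hGu] at this
        linarith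
      · positivity
  refine ⟨u, ⟨hu1, (hfix u hu0).mpr hGu, hanti, hmonoOn⟩, ?_⟩
  rintro v ⟨hv1, hveq, -, -⟩
  have hGv : G v = 0 := (hfix v (lt_trans one_pos hv1)).mp hveq
  rcases lt_trichotomy v u with h | h | h
  · exfalso
    have := hGmono v u (le_of_lt hv1) h
    rw [hGv, hGu] at this
    exact lt_irrefl 0 this
  · exact h
  · exfalso
    have := hGmono u v (le_of_lt hu1) h
    rw [hGv, hGu] at this
    exact lt_irrefl 0 this
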